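/- Let a be a positive integer and b, b' integers with b·b' ≡ 1 (mod a). Then for every integer γ, s(b', a; (b'·γ)/a, 0) = s(b, a; γ/a, 0). -/

import Mathlib

open scoped BigOperators

/-- The sawtooth function `((x))`: `x - ⌊x⌋ - 1/2` if `x` is not an integer, `0` otherwise. -/
noncomputable def sawtooth (x : ℝ) : ℝ :=
  if Int.fract x = 0 then 0 else Int.fract x - 1/2

/-- The Dedekind–Rademacher sum `s(b, a; x, y)`. -/
noncomputable def drSum (b : ℤ) (a : ℕ) (x y : ℝ) : ℝ :=
  ∑ j ∈ Finset.range a, sawtooth (x + b * ((j : ℝ) + y) / a) * sawtooth (((j : ℝ) + y) / a)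

lemma sawtooth_add_int (x : ℝ) (n : ℤ) : sawtooth (x + n) = sawtooth x := by
  simp [sawtooth, Int.fract_add_intCast]

lemma sawtooth_neg (x : ℝ) : sawtooth (-x) = - sawtooth x := by
  unfold sawtooth
  by_cases h : Int.fract x = 0
  · simp [h, Int.fract_neg_eq_zero.mpr h]
  · rw [Int.fract_neg h, if_neg h, if_neg]
    · ring
    · have := Int.fract_lt_one x
      intro hh; linarith

lemma saw_congr (a : ℕ) {m n : ℤ} (h : m ≡ n [ZMOD (a:ℤ)]) :
    sawtooth ((m : ℝ)/a) = sawtooth ((n : ℝ)/a) := by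
  rcases Nat.eq_zero_or_pos a with rfl | ha
  · have : m = n := by simpa [Int.ModEq] using h
    rw [this]
  obtain ⟨t, ht⟩ := h.dvd
  have hm : m = n + a * (-t) := by linarith [ht]
  have ha' : (a:ℝ) ≠ 0 := Nat.cast_ne_zero.mpr ha.ne'
  have hx : (m:ℝ)/a = (n:ℝ)/a + ((-t : ℤ) : ℝ) := by
    rw [hm]; push_cast; field_simp
  rw [hx, sawtooth_add_int]

lemma saw_neg_int (a : ℕ) (m : ℤ) :
    sawtooth (((-m : ℤ) : ℝ)/a) = - sawtooth ((m : ℝ)/a) := by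
  rw [show (((-m : ℤ) : ℝ)/a) = -((m:ℝ)/a) by push_cast; ring, sawtooth_neg]

theorem drSum_inverse_symmetry (a : ℕ) (ha : 0 < a) (b b' : ℤ)
    (hbb' : b * b' ≡ 1 [ZMOD (a : ℤ)]) (γ : ℤ) :
    drSum b' a ((b' : ℝ) * (γ : ℝ) / a) 0 = drSum b a ((γ : ℝ) / a) 0 := by
  have ha' : (a:ℝ) ≠ 0 := Nat.cast_ne_zero.mpr ha.ne'
  have haZ : (0:ℤ) < (a:ℤ) := by exact_mod_cast ha
  have hb : ((b : ZMod a)) * ((b' : ZMod a)) = 1 := by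
    have := (ZMod.intCast_eq_intCast_iff _ _ _).mpr hbb'
    push_cast at this; exact this
  -- modular facts
  have modeq : ∀ x y : ℤ, ((x : ZMod a) = (y : ZMod a)) → x ≡ y [ZMOD (a:ℤ)] :=
    fun x y h => (ZMod.intCast_eq_intCast_iff _ _ _).mp h
  unfold drSum
  -- rewrite terms in integer form
  have L : ∀ j : ℕ, ((b':ℝ) * (γ:ℝ) / a + (b':ℝ) * ((j:ℝ)+0)/a) = ((b' * (γ + j) : ℤ) : ℝ)/a := by
    intro j; push_cast; field_simp; try ring
  have R : ∀ j : ℕ, ((γ:ℝ)/a + (b:ℝ) * ((j:ℝ)+0)/a) = ((γ + b * j : ℤ) : ℝ)/a := by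
    intro j; push_cast; field_simp; try ring
  have J : ∀ j : ℕ, ((j:ℝ)+0)/a = (((j:ℤ)):ℝ)/a := by intro j; push_cast; ring
  calc (∑ j ∈ Finset.range a, sawtooth ((b':ℝ)*(γ:ℝ)/a + b' * ((j:ℝ)+0)/a) * sawtooth (((j:ℝ)+0)/a))
      = ∑ j ∈ Finset.range a, sawtooth (((b' * (γ + j) : ℤ):ℝ)/a) * sawtooth ((((j:ℤ)):ℝ)/a) := by
        refine Finset.sum_congr rfl fun j _ => ?_
        rw [L j, J j]
    _ = ∑ j ∈ Finset.range a, sawtooth (((γ + b * j : ℤ):ℝ)/a) * sawtooth ((((j:ℤ)):ℝ)/a) := ?_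
    _ = ∑ j ∈ Finset.range a, sawtooth ((γ:ℝ)/a + b * ((j:ℝ)+0)/a) * sawtooth (((j:ℝ)+0)/a) := by
        refine Finset.sum_congr rfl fun j _ => ?_
        rw [R j, J j]
  -- the reindexing
  refine Finset.sum_nbij' (fun j => ((-b' * (γ + j)) % a).toNat)
    (fun k => ((-γ - b * k) % a).toNat) ?_ ?_ ?_ ?_ ?_
  · intro j _
    simp only [Finset.mem_range]
    have h1 := Int.emod_nonneg (-b' * (γ + j)) haZ.ne'
    have h2 := Int.emod_lt_of_pos (-b' * (γ + j)) haZ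
    omega
  · intro k _
    simp only [Finset.mem_range]
    have h1 := Int.emod_nonneg (-γ - b * k) haZ.ne'
    have h2 := Int.emod_lt_of_pos (-γ - b * k) haZ
    omega
  · intro j hj
    beta_reduce
    simp only [Finset.mem_range] at hj
    set k : ℤ := (-b' * (γ + (j:ℤ))) % (a:ℤ) with hkdef
    have h1 : 0 ≤ k := Int.emod_nonneg _ haZ.ne'
    have hcast : ((k.toNat : ℤ)) = k := Int.toNat_of_nonneg h1
    have key : (-γ - b * (k.toNat:ℤ)) % (a:ℤ) = (j:ℤ) % (a:ℤ) := by
      refine modeq _ _ ?_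
      rw [hcast, hkdef]
      push_cast [ZMod.intCast_mod]
      linear_combination ((γ:ZMod a) + (j:ZMod a)) * hb
    rw [key, Int.emod_eq_of_lt (by positivity) (by exact_mod_cast hj)]
    simp
  · intro k hk
    beta_reduce
    simp only [Finset.mem_range] at hk
    set m : ℤ := (-γ - b * (k:ℤ)) % (a:ℤ) with hmdef
    have h1 : 0 ≤ m := Int.emod_nonneg _ haZ.ne'
    have hcast : ((m.toNat : ℤ)) = m := Int.toNat_of_nonneg h1
    have key : (-b' * (γ + (m.toNat:ℤ))) % (a:ℤ) = (k:ℤ) % (a:ℤ) := by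
      refine modeq _ _ ?_
      rw [hcast, hmdef]
      push_cast [ZMod.intCast_mod]
      linear_combination ((k:ZMod a)) * hb
    rw [key, Int.emod_eq_of_lt (by positivity) (by exact_mod_cast hk)]
    simp
  · intro j hj
    beta_reduce
    simp only [Finset.mem_range] at hj
    set k : ℤ := (-b' * (γ + (j:ℤ))) % (a:ℤ) with hkdef
    have h1 : 0 ≤ k := Int.emod_nonneg _ haZ.ne'
    have hcast : ((k.toNat : ℤ)) = k := Int.toNat_of_nonneg h1
    have c1 : (γ + b * (k.toNat:ℤ)) ≡ (-(j:ℤ)) [ZMOD (a:ℤ)] := by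
      refine modeq _ _ ?_
      rw [hcast, hkdef]
      push_cast [ZMod.intCast_mod]
      linear_combination (-(γ:ZMod a) - (j:ZMod a)) * hb
    have c2 : ((k.toNat:ℤ)) ≡ (-(b' * (γ + (j:ℤ)))) [ZMOD (a:ℤ)] := by
      refine modeq _ _ ?_
      rw [hcast, hkdef]
      push_cast [ZMod.intCast_mod]
      ring
    rw [saw_congr a c1, saw_congr a c2, show (-(j:ℤ)) = -((j:ℤ)) by ring,
      saw_neg_int, saw_neg_int]
    ring
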